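/- Let τ be a nonempty finite type, n : ℕ, and r : List τ → ℝ. Suppose V : List τ → ℝ satisfies the local max constraint and the boundary condition for r. Let y be any list over τ of length n that is greedy for V, i.e., for every i < n the (i+1)-st token t of y satisfies V ((y.take i) ++ [t]) = max over t' : τ of V ((y.take i) ++ [t']). Then r y = max over all lists y' over τ of length n of r y'; that is, greedy token-by-token decoding with respect to V produces an optimal full sequence. -/

import Mathlib

/-- `V` satisfies the local max constraint: for every list `s` over `τ` with
`s.length < n`, `V s` equals the maximum over tokens `t : τ` of `V (s ++ [t])`. -/
def LocalMaxConstraint {τ : Type*} [Fintype τ] [Nonempty τ] (n : ℕ) (V : List τ → ℝ) : Prop :=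
  ∀ s : List τ, s.length < n →
    V s = Finset.univ.sup' Finset.univ_nonempty (fun t : τ => V (s ++ [t]))

/-- `V` satisfies the boundary condition for `r`: `V y = r y` for every
full sequence `y` (list of length `n`). -/
def BoundaryCondition {τ : Type*} (n : ℕ) (r V : List τ → ℝ) : Prop :=
  ∀ y : List τ, y.length = n → V y = r y

/-- If `V` satisfies the local max constraint and the boundary condition for `r`, and
`y` is a full sequence of length `n` that is greedy for `V` — for every `i < n`, the
`(i+1)`-st token `t` of `y` satisfies
`V (y.take i ++ [t]) = max over t' : τ of V (y.take i ++ [t'])` — then `r y` is the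
maximal reward over all full sequences of length `n`: greedy token-by-token decoding
with respect to `V` produces an optimal full sequence. -/
theorem greedy_decoding_is_optimal {τ : Type*} [Fintype τ] [Nonempty τ]
    (n : ℕ) (r V : List τ → ℝ)
    (hmax : LocalMaxConstraint n V) (hbd : BoundaryCondition n r V)
    (y : List τ) (hlen : y.length = n)
    (hgreedy : ∀ (i : ℕ) (hi : i < n),
      V (y.take i ++ [y.get ⟨i, by omega⟩]) =
        Finset.univ.sup' Finset.univ_nonempty (fun t' : τ => V (y.take i ++ [t']))) :
    r y = Finset.univ.sup' Finset.univ_nonempty (fun y' : Fin n → τ => r (List.ofFn y')) := by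
  -- any full sequence has V z ≤ V []
  have key : ∀ (z : List τ), z.length = n → V z ≤ V [] := by
    intro z hz
    have step : ∀ i ≤ n, V (z.take i) ≤ V [] := by
      intro i hi
      induction i with
      | zero => simp
      | succ k ih =>
        have hk : k < n := by omega
        have hkz : k < z.length := by omega
        have h1 : z.take (k + 1) = z.take k ++ [z[k]] := by
          rw [List.take_concat_get' z k hkz]
        have h2 := hmax (z.take k) (by
          rw [List.length_take]; omega)
        have h3 : V (z.take k ++ [z[k]]) ≤
            Finset.univ.sup' Finset.univ_nonempty (fun t : τ => V (z.take k ++ [t])) :=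
          Finset.le_sup' (fun t : τ => V (z.take k ++ [t])) (Finset.mem_univ z[k])
        calc V (z.take (k + 1)) = V (z.take k ++ [z[k]]) := by rw [h1]
          _ ≤ V (z.take k) := by rw [h2]; exact h3
          _ ≤ V [] := ih (by omega)
    have := step n le_rfl
    rwa [show z.take n = z by rw [← hz]; exact List.take_length] at this
  -- the greedy sequence achieves V y = V []
  have heq : ∀ i ≤ n, V (y.take i) = V [] := by
    intro i hi
    induction i with
    | zero => simp
    | succ k ih =>
      have hk : k < n := by omega
      have hky : k < y.length := by omega
      have h1 : y.take (k + 1) = y.take k ++ [y.get ⟨k, hky⟩] := by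
        simpa using List.take_concat_get' y k hky
      rw [h1, hgreedy k hk, ← hmax (y.take k) (by rw [List.length_take]; omega)]
      exact ih (by omega)
  have hVy : V y = V [] := by
    have := heq n le_rfl
    rwa [show y.take n = y by rw [← hlen]; exact List.take_length] at this
  have hry : r y = V [] := by rw [← hbd y hlen, hVy]
  apply le_antisymm
  · rw [hry]
    refine Finset.le_sup'_of_le _ (Finset.mem_univ (fun i : Fin n => y.get (i.cast hlen.symm))) ?_
    have : List.ofFn (fun i : Fin n => y.get (i.cast hlen.symm)) = y := by
      subst hlen; simpa using List.ofFn_get y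
    rw [this, hry]
  · apply Finset.sup'_le
    intro f _
    rw [hry, ← hbd _ (by simp)]
    exact key _ (by simp)
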